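/- arXiv:1303.6981 — 5 statements merged into one kernel-verified Lean document; each statement's English description precedes it below -/
import Mathlib

section
/- Let 𝒞 be a field of subsets of Ω and P : 𝒞 → [0,1] a price assignment. If P is coherent in betting system 2, then P is countably additive: for every sequence (A_i)_{i≥2} of pairwise disjoint sets in 𝒞 whose union A_1 = ∪_{i≥2} A_i lies in 𝒞, one has P(A_1) = Σ_{i=2}^∞ P(A_i). -/
open Filter MeasureTheory ENNReal

variable {Ω : Type*}

noncomputable def ind (A : Set Ω) (ω : Ω) : ℝ := A.indicator (fun _ => (1:ℝ)) ω

def SeriesTendsTo (f : ℕ → ℝ) (x : ℝ) : Prop :=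
  Tendsto (fun n => ∑ i ∈ Finset.range n, f i) atTop (nhds x)

def SeriesConv (f : ℕ → ℝ) : Prop := ∃ x, SeriesTendsTo f x

noncomputable def bterm (P : Set Ω → ℝ) (α : ℕ → ℝ) (A : ℕ → Set Ω) (ω : Ω) (i : ℕ) : ℝ :=
  α i * (ind (A i) ω - P (A i))

def IsSetField (C : Set (Set Ω)) : Prop :=
  Set.univ ∈ C ∧ (∀ A ∈ C, Aᶜ ∈ C) ∧ ∀ A ∈ C, ∀ B ∈ C, A ∪ B ∈ C

def System1 (C : Set (Set Ω)) (α : ℕ → ℝ) (A : ℕ → Set Ω) : Prop :=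
  (∀ i, A i ∈ C) ∧ {i | α i ≠ 0}.Finite

def System2 (C : Set (Set Ω)) (P : Set Ω → ℝ) (α : ℕ → ℝ) (A : ℕ → Set Ω) : Prop :=
  (∀ i, A i ∈ C) ∧ Summable (fun i => |α i| * P (A i)) ∧
    ∀ ω, SeriesConv (bterm P α A ω)

def System2A (C : Set (Set Ω)) (P : Set Ω → ℝ) (α : ℕ → ℝ) (A : ℕ → Set Ω) : Prop :=
  (∀ i, A i ∈ C) ∧ ∀ ω, Summable (fun i => |bterm P α A ω i|)

def System2B (C : Set (Set Ω)) (P : Set Ω → ℝ) (α : ℕ → ℝ) (A : ℕ → Set Ω) : Prop :=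
  (∀ i, A i ∈ C) ∧ ∃ M : ℝ, ∀ ω, ∀ n, ∑ i ∈ Finset.range n, |bterm P α A ω i| ≤ M

def System3 (C : Set (Set Ω)) (P : Set Ω → ℝ) (α : ℕ → ℝ) (A : ℕ → Set Ω) : Prop :=
  (∀ i, A i ∈ C) ∧ SeriesConv (fun i => α i * P (A i)) ∧
    ∀ ω, SeriesConv (bterm P α A ω)

def IncoherentIn (P : Set Ω → ℝ) (S : (ℕ → ℝ) → (ℕ → Set Ω) → Prop) : Prop :=
  ∃ α A, S α A ∧ ∃ ε > (0:ℝ), ∀ ω, ∃ L, SeriesTendsTo (bterm P α A ω) L ∧ L ≤ -ε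

def CoherentIn (P : Set Ω → ℝ) (S : (ℕ → ℝ) → (ℕ → Set Ω) → Prop) : Prop :=
  ¬ IncoherentIn P S

def IsNullSet (C : Set (Set Ω)) (P : Set Ω → ℝ) (Z : Set Ω) : Prop :=
  ∀ δ : ℝ, 0 < δ → ∃ Zd ∈ C, Z ⊆ Zd ∧ P Zd < δ

def WeaklyIncoherentIn (C : Set (Set Ω)) (P : Set Ω → ℝ)
    (S : (ℕ → ℝ) → (ℕ → Set Ω) → Prop) : Prop :=
  ∃ α A, S α A ∧ ∃ ε > (0:ℝ), ∃ Z : Set Ω, IsNullSet C P Z ∧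
    ∀ ω ∉ Z, ∃ L, SeriesTendsTo (bterm P α A ω) L ∧ L ≤ -ε

def StronglyCoherentIn (C : Set (Set Ω)) (P : Set Ω → ℝ)
    (S : (ℕ → ℝ) → (ℕ → Set Ω) → Prop) : Prop :=
  ¬ WeaklyIncoherentIn C P S

def IrrationalIn (P : Set Ω → ℝ) (S : (ℕ → ℝ) → (ℕ → Set Ω) → Prop) : Prop :=
  ∃ α A, S α A ∧ ∀ ω, ∃ L, SeriesTendsTo (bterm P α A ω) L ∧ L < 0

def RationalIn (P : Set Ω → ℝ) (S : (ℕ → ℝ) → (ℕ → Set Ω) → Prop) : Prop :=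
  ¬ IrrationalIn P S

def IsCAProb (C : Set (Set Ω)) (P : Set Ω → ℝ) : Prop :=
  P Set.univ = 1 ∧ (∀ A ∈ C, 0 ≤ P A) ∧
  (∀ A ∈ C, ∀ B ∈ C, Disjoint A B → P (A ∪ B) = P A + P B) ∧
  (∀ A : ℕ → Set Ω, (∀ i, A i ∈ C) → Pairwise (Function.onFun Disjoint A) →
    (⋃ i, A i) ∈ C → HasSum (fun i => P (A i)) (P (⋃ i, A i)))

def IsPAtom (C : Set (Set Ω)) (P : Set Ω → ℝ) (F : Set Ω) : Prop :=
  F ∈ C ∧ 0 < P F ∧ ∀ B ∈ C, B ⊆ F → P B = P F ∨ P B = 0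

def FiniteAtomicPartition (C : Set (Set Ω)) (P : Set Ω → ℝ) : Prop :=
  ∃ (n : ℕ) (F : Fin n → Set Ω), (∀ j, IsPAtom C P (F j)) ∧
    Pairwise (Function.onFun Disjoint F) ∧ (⋃ j, F j) = Set.univ

def IsPFinite (C : Set (Set Ω)) (P : Set Ω → ℝ) : Prop :=
  ∀ B : ℕ → Set Ω, (∀ i, B i ∈ C) → (∀ i, B (i+1) ⊆ B i) →
    Tendsto (fun i => P (B i)) atTop (nhds 0) → ∃ j, P (B j) = 0

/-- Auxiliary: if terms vanish beyond `N`, the series tends to the `N`-th partial sum. -/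
lemma seriesTendsTo_of_vanish (f : ℕ → ℝ) (N : ℕ) (h : ∀ i, N ≤ i → f i = 0) :
    SeriesTendsTo f (∑ i ∈ Finset.range N, f i) := by
  apply Tendsto.congr' _ (tendsto_const_nhds)
  filter_upwards [eventually_ge_atTop N] with n hn
  exact Finset.sum_subset (Finset.range_subset_range.mpr hn)
    (fun i _ hi => h i (by simpa using hi))

/-- Finite additivity from coherence in system 2. -/
lemma finadd_of_coherent (C : Set (Set Ω)) (P : Set Ω → ℝ) (hC : IsSetField C)
    (hcoh : CoherentIn P (System2 C P)) :
    ∀ A ∈ C, ∀ B ∈ C, Disjoint A B → P (A ∪ B) = P A + P B := by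
  intro A hAm B hBm hd
  by_contra hne
  set c : ℝ := P (A ∪ B) - P A - P B with hc
  have hc0 : c ≠ 0 := by
    intro h; apply hne; linarith [sub_eq_zero.mp (by linarith : P (A ∪ B) - (P A + P B) = 0)]
  set t : ℝ := if 0 < c then (1:ℝ) else -1 with ht
  have htc : -(t * c) = -|c| := by
    rcases lt_or_gt_of_ne hc0 with h | h
    · rw [ht, if_neg (not_lt.mpr h.le), abs_of_neg h]; ring
    · rw [ht, if_pos h, abs_of_pos h]; ring
  set α : ℕ → ℝ := fun i => if i = 0 then t else if i = 1 then -t else if i = 2 then -t else 0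
    with hα
  set Bs : ℕ → Set Ω := fun i => if i = 0 then A ∪ B else if i = 1 then A else B with hBs
  have hαz : ∀ i, 3 ≤ i → α i = 0 := by
    intro i hi
    have h0 : i ≠ 0 := by omega
    have h1 : i ≠ 1 := by omega
    have h2 : i ≠ 2 := by omega
    simp [hα, h0, h1, h2]
  apply hcoh
  refine ⟨α, Bs, ⟨?_, ?_, ?_⟩, |c|, abs_pos.mpr hc0, ?_⟩
  · intro i
    rcases hC with ⟨_, _, hU⟩
    by_cases h0 : i = 0
    · simpa [hBs, h0] using hU A hAm B hBm
    · by_cases h1 : i = 1 <;> simp [hBs, h0, h1, hAm, hBm]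
  · apply summable_of_ne_finset_zero (s := Finset.range 3)
    intro i hi
    rw [hαz i (by simpa using hi)]; simp
  · intro ω
    exact ⟨_, seriesTendsTo_of_vanish _ 3 (fun i hi => by
      simp [bterm, hαz i hi])⟩
  · intro ω
    have hsum3 : ∑ i ∈ Finset.range 3, bterm P α Bs ω i = -|c| := by
      have hind : ind (A ∪ B) ω = ind A ω + ind B ω := by
        simp only [ind]
        rw [Set.indicator_union_of_disjoint hd]
      rw [show (3:ℕ) = 2 + 1 by rfl, Finset.sum_range_succ, Finset.sum_range_succ,
        Finset.sum_range_one]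
      simp only [bterm, hα, hBs]
      norm_num
      rw [hind, ← htc]
      ring
    refine ⟨-|c|, ?_, le_refl _⟩
    have := seriesTendsTo_of_vanish (bterm P α Bs ω) 3
      (fun i hi => by simp [bterm, hαz i hi])
    rwa [hsum3] at this

theorem stmt1 (C : Set (Set Ω)) (P : Set Ω → ℝ) (hC : IsSetField C)
    (hrange : ∀ A ∈ C, P A ∈ Set.Icc (0:ℝ) 1)
    (hcoh : CoherentIn P (System2 C P))
    (A : ℕ → Set Ω) (hA : ∀ i, A i ∈ C)
    (hdisj : Pairwise (Function.onFun Disjoint A))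
    (hun : (⋃ i, A i) ∈ C) :
    HasSum (fun i => P (A i)) (P (⋃ i, A i)) := by
  have finadd := finadd_of_coherent C P hC hcoh
  have hempty : (∅ : Set Ω) ∈ C := by
    simpa using hC.2.1 Set.univ hC.1
  have hP0 : P ∅ = 0 := by
    have := finadd ∅ hempty ∅ hempty (disjoint_bot_left)
    simp only [Set.union_empty] at this
    linarith
  -- finite unions
  have hfin : ∀ n : ℕ, (⋃ i ∈ Finset.range n, A i) ∈ C ∧
      P (⋃ i ∈ Finset.range n, A i) = ∑ i ∈ Finset.range n, P (A i) := by
    intro n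
    induction n with
    | zero => simpa using ⟨hempty, hP0⟩
    | succ n ih =>
      have hins : (⋃ i ∈ Finset.range (n+1), A i) = A n ∪ ⋃ i ∈ Finset.range n, A i := by
        rw [Finset.range_add_one, Finset.set_biUnion_insert]
      have hd : Disjoint (A n) (⋃ i ∈ Finset.range n, A i) := by
        simp only [Set.disjoint_iUnion_right]
        intro i hi
        exact hdisj (by simp at hi; omega)
      constructor
      · rw [hins]; exact hC.2.2 _ (hA n) _ ih.1
      · rw [hins, finadd _ (hA n) _ ih.1 hd, ih.2, Finset.sum_range_succ]; ring
  -- summability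
  have hnn : ∀ i, 0 ≤ P (A i) := fun i => (hrange _ (hA i)).1
  have hsummable : Summable (fun i => P (A i)) := by
    apply summable_of_sum_range_le hnn (c := 1)
    intro n
    rw [← (hfin n).2]
    exact (hrange _ (hfin n).1).2
  set s : ℝ := ∑' i, P (A i) with hs
  have hhs : HasSum (fun i => P (A i)) s := hsummable.hasSum
  have hQ : Tendsto (fun n => ∑ i ∈ Finset.range n, P (A i)) atTop (nhds s) :=
    hhs.tendsto_sum_nat
  suffices hPU : P (⋃ i, A i) = s by rwa [hPU]
  by_contra hne
  set c : ℝ := P (⋃ i, A i) - s with hc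
  have hc0 : c ≠ 0 := sub_ne_zero.mpr hne
  set t : ℝ := if 0 < c then (-1:ℝ) else 1 with ht
  have htc : t * c = -|c| := by
    rcases lt_or_gt_of_ne hc0 with h | h
    · rw [ht, if_neg (not_lt.mpr h.le), abs_of_neg h]; ring
    · rw [ht, if_pos h, abs_of_pos h]; ring
  set α : ℕ → ℝ := fun i => if i = 0 then -t else t with hα
  set Bs : ℕ → Set Ω := fun i => if i = 0 then ⋃ j, A j else A (i-1) with hBs
  -- indicator partial sums converge pointwise
  have hT : ∀ ω, Tendsto (fun n => ∑ i ∈ Finset.range n, ind (A i) ω) atTop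
      (nhds (ind (⋃ i, A i) ω)) := by
    intro ω
    by_cases hω : ω ∈ ⋃ i, A i
    · obtain ⟨j, hj⟩ := Set.mem_iUnion.mp hω
      have hval : ind (⋃ i, A i) ω = 1 := by simp [ind, Set.indicator_of_mem hω]
      rw [hval]
      apply Tendsto.congr' _ (tendsto_const_nhds)
      filter_upwards [eventually_ge_atTop (j+1)] with n hn
      rw [Finset.sum_eq_single j]
      · simp [ind, Set.indicator_of_mem hj]
      · intro i _ hij
        have : ω ∉ A i := fun hmem =>
          (Set.disjoint_left.mp (hdisj (Ne.symm hij))) hj hmem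
        simp [ind, Set.indicator_of_notMem this]
      · intro hjn; exact absurd (Finset.mem_range.mpr (by omega)) hjn
    · have hval : ind (⋃ i, A i) ω = 0 := by simp [ind, Set.indicator_of_notMem hω]
      have hz : ∀ i, ind (A i) ω = 0 := by
        intro i
        have : ω ∉ A i := fun h => hω (Set.mem_iUnion.mpr ⟨i, h⟩)
        simp [ind, Set.indicator_of_notMem this]
      rw [hval]
      apply Tendsto.congr' _ (tendsto_const_nhds)
      filter_upwards with n
      rw [Finset.sum_congr rfl (fun i _ => (hz i))]
      simp
  -- key convergence of the balance
  have key : ∀ ω, SeriesTendsTo (bterm P α Bs ω) (-|c|) := by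
    intro ω
    unfold SeriesTendsTo
    rw [← tendsto_add_atTop_iff_nat 1]
    have hsplit : ∀ n, ∑ i ∈ Finset.range (n+1), bterm P α Bs ω i
        = (-t) * (ind (⋃ j, A j) ω - P (⋃ j, A j)) +
          t * ((∑ i ∈ Finset.range n, ind (A i) ω) - ∑ i ∈ Finset.range n, P (A i)) := by
      intro n
      rw [Finset.sum_range_succ']
      have h1 : ∀ i ∈ Finset.range n, bterm P α Bs ω (i+1)
          = t * (ind (A i) ω - P (A i)) := by
        intro i _
        simp [bterm, hα, hBs]
      rw [Finset.sum_congr rfl h1]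
      have h0 : bterm P α Bs ω 0 = (-t) * (ind (⋃ j, A j) ω - P (⋃ j, A j)) := by
        simp [bterm, hα, hBs]
      rw [h0, ← Finset.mul_sum, Finset.sum_sub_distrib]
      ring
    have hlim : Tendsto (fun n => (-t) * (ind (⋃ j, A j) ω - P (⋃ j, A j)) +
          t * ((∑ i ∈ Finset.range n, ind (A i) ω) - ∑ i ∈ Finset.range n, P (A i)))
        atTop (nhds ((-t) * (ind (⋃ j, A j) ω - P (⋃ j, A j)) +
          t * (ind (⋃ j, A j) ω - s))) :=
      tendsto_const_nhds.add (((hT ω).sub hQ).const_mul t)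
    have heq : (-t) * (ind (⋃ j, A j) ω - P (⋃ j, A j)) +
        t * (ind (⋃ j, A j) ω - s) = -|c| := by
      rw [← htc, hc]; ring
    rw [← heq]
    exact hlim.congr (fun n => (hsplit n).symm)
  -- assemble the incoherent portfolio
  apply absurd hcoh
  intro hcoh'
  apply hcoh'
  refine ⟨α, Bs, ⟨?_, ?_, ?_⟩, |c|, abs_pos.mpr hc0, fun ω => ⟨-|c|, key ω, le_refl _⟩⟩
  · intro i
    by_cases h0 : i = 0 <;> simp [hBs, h0, hun, hA]
  · have habs : ∀ i, |α i| * P (Bs i) = P (Bs i) := by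
      intro i
      have habst : |t| = 1 := by
        rw [ht]; split_ifs <;> simp
      have : |α i| = 1 := by
        by_cases h0 : i = 0 <;> simp [hα, h0, abs_neg, habst]
      rw [this, one_mul]
    rw [show (fun i => |α i| * P (Bs i)) = fun i => P (Bs i) from funext habs]
    apply (summable_nat_add_iff 1).mp
    have : (fun n => P (Bs (n+1))) = fun n => P (A n) := by
      funext n; simp [hBs]
    rw [this]
    exact hsummable
  · intro ω
    exact ⟨-|c|, key ω⟩
end

section
/- Let 𝒞 be a field on Ω, P a countably additive probability on 𝒞, and P* its unique countably additive extension to σ(𝒞). For every betting portfolio (α_i, A_i)_{i≥1} with A_i ∈ 𝒞, Σ_{i=1}^∞ |α_i| P(A_i) < ∞, and pointwise convergence of Σ α_i(I_{A_i} − P(A_i)) on Ω, the expectation of the balance under P* is 0. Consequently there exists ω ∈ Ω with balance ≥ 0, so P is coherent in betting system 2. -/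
open Filter MeasureTheory ENNReal

variable {Ω : Type*}

theorem aux_key {Ω : Type*} [m : MeasurableSpace Ω] (C : Set (Set Ω)) (P : Set Ω → ℝ)
    (hP : IsCAProb C P)
    (hm : m = MeasurableSpace.generateFrom C)
    (μ : Measure Ω) [IsProbabilityMeasure μ]
    (hμ : ∀ A ∈ C, μ A = ENNReal.ofReal (P A)) :
    ∀ α A, System2 C P α A → ∀ b : Ω → ℝ,
      (∀ ω, SeriesTendsTo (bterm P α A ω) (b ω)) →
      Integrable b μ ∧ ∫ ω, b ω ∂μ = 0 ∧ ∃ ω, 0 ≤ b ω := by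
  intro α A hS b hb
  obtain ⟨hAC, hsum, _⟩ := hS
  have hPnn : ∀ i, 0 ≤ P (A i) := fun i => hP.2.1 _ (hAC i)
  have hAm : ∀ i, MeasurableSet (A i) := fun i => by
    rw [hm]; exact MeasurableSpace.measurableSet_generateFrom (hAC i)
  have hindm : ∀ i, Measurable (ind (A i)) := fun i =>
    (measurable_const.indicator (hAm i))
  have htm : ∀ i, Measurable (fun ω => bterm P α A ω i) := by
    intro i
    unfold bterm
    exact (((hindm i).sub measurable_const).const_mul _)
  -- integral of ind
  have hind_int : ∀ i, ∫ ω, ind (A i) ω ∂μ = P (A i) := by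
    intro i
    have := MeasureTheory.integral_indicator_const (1:ℝ) (hAm i) (μ := μ)
    simp only [smul_eq_mul, mul_one] at this
    rw [show (fun ω => ind (A i) ω) = (A i).indicator (fun _ => (1:ℝ)) from rfl, this,
      measureReal_def, hμ _ (hAC i), ENNReal.toReal_ofReal (hPnn i)]
  have hind_nn : ∀ i ω, 0 ≤ ind (A i) ω := fun i ω =>
    Set.indicator_nonneg (fun _ _ => zero_le_one) ω
  have hind_le : ∀ i ω, ind (A i) ω ≤ 1 := by
    intro i ω
    unfold ind Set.indicator
    split <;> norm_num
  have hind_integr : ∀ i, Integrable (ind (A i)) μ := by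
    intro i
    refine (integrable_const (1:ℝ)).mono' (hindm i).aestronglyMeasurable ?_
    refine Eventually.of_forall fun ω => ?_
    rw [Real.norm_of_nonneg (hind_nn i ω)]
    exact hind_le i ω
  have hint : ∀ i, Integrable (fun ω => bterm P α A ω i) μ := by
    intro i
    unfold bterm
    exact (((hind_integr i).sub (integrable_const _)).const_mul _)
  have hi0 : ∀ i, ∫ ω, bterm P α A ω i ∂μ = 0 := by
    intro i
    unfold bterm
    rw [integral_const_mul, integral_sub (hind_integr i) (integrable_const _),
      hind_int i, integral_const]
    simp
  -- norm bound
  have hnormle : ∀ i, ∫ ω, ‖bterm P α A ω i‖ ∂μ ≤ 2 * (|α i| * P (A i)) := by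
    intro i
    have h1 : ∀ ω, ‖bterm P α A ω i‖ ≤ |α i| * (ind (A i) ω + P (A i)) := by
      intro ω
      unfold bterm
      rw [norm_mul, Real.norm_eq_abs, Real.norm_eq_abs]
      refine mul_le_mul_of_nonneg_left ?_ (abs_nonneg _)
      refine (abs_sub (ind (A i) ω) (P (A i))).trans ?_
      rw [abs_of_nonneg (hind_nn i ω), abs_of_nonneg (hPnn i)]
    have h2 : ∫ ω, ‖bterm P α A ω i‖ ∂μ ≤ ∫ ω, |α i| * (ind (A i) ω + P (A i)) ∂μ := by
      refine integral_mono (hint i).norm ?_ h1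
      exact ((hind_integr i).add (integrable_const _)).const_mul _
    refine h2.trans ?_
    rw [integral_const_mul, integral_add (hind_integr i) (integrable_const _),
      hind_int i, integral_const]
    simp [measure_univ]
    ring_nf
    exact le_refl _
  have hnorm_sum : Summable (fun i => ∫ ω, ‖bterm P α A ω i‖ ∂μ) := by
    refine Summable.of_nonneg_of_le (fun i => integral_nonneg fun ω => norm_nonneg _)
      hnormle (hsum.mul_left 2)
  -- lintegral bound
  have hlint : ∑' i, ∫⁻ ω, ‖bterm P α A ω i‖₊ ∂μ ≠ ∞ := by
    have heq : ∀ i, ∫⁻ ω, (‖bterm P α A ω i‖₊ : ℝ≥0∞) ∂μ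
        = ENNReal.ofReal (∫ ω, ‖bterm P α A ω i‖ ∂μ) := fun i =>
      (ofReal_integral_norm_eq_lintegral_enorm (hint i)).symm
    rw [funext heq, ← ENNReal.ofReal_tsum_of_nonneg
      (fun i => integral_nonneg fun ω => norm_nonneg _) hnorm_sum]
    exact ENNReal.ofReal_ne_top
  have hmeas_nn : ∀ i, Measurable (fun ω => (‖bterm P α A ω i‖₊ : ℝ≥0∞)) :=
    fun i => (htm i).nnnorm.coe_nnreal_ennreal
  have hg_meas : Measurable (fun ω => ∑' i, (‖bterm P α A ω i‖₊ : ℝ≥0∞)) :=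
    Measurable.ennreal_tsum hmeas_nn
  have hg_lint : ∫⁻ ω, ∑' i, (‖bterm P α A ω i‖₊ : ℝ≥0∞) ∂μ ≠ ∞ := by
    rw [lintegral_tsum fun i => (hmeas_nn i).aemeasurable]
    exact hlint
  have hae : ∀ᵐ ω ∂μ, Summable fun i => |bterm P α A ω i| := by
    refine (ae_lt_top hg_meas hg_lint).mono fun ω hω => ?_
    have : Summable fun i => (‖bterm P α A ω i‖₊ : ℝ) := by
      rw [← ENNReal.tsum_coe_ne_top_iff_summable_coe]
      exact hω.ne
    simpa [coe_nnnorm, Real.norm_eq_abs] using this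
  have hb_eq : (fun ω => ∑' i, bterm P α A ω i) =ᵐ[μ] b := by
    refine hae.mono fun ω hω => ?_
    have hsummable : Summable (bterm P α A ω) := by
      refine Summable.of_abs ?_
      exact hω
    exact tendsto_nhds_unique (hsummable.hasSum.tendsto_sum_nat) (hb ω)
  -- b is measurable
  have hb_meas : Measurable b :=
    measurable_of_tendsto_metrizable
      (fun n => Finset.measurable_sum (Finset.range n) fun i _ => htm i)
      (tendsto_pi_nhds.2 fun ω => hb ω)
  -- integrable bound
  have hbound_int : Integrable (fun ω => (∑' i, (‖bterm P α A ω i‖₊ : ℝ≥0∞)).toReal) μ :=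
    integrable_toReal_of_lintegral_ne_top hg_meas.aemeasurable hg_lint
  have hb_int : Integrable b μ := by
    refine hbound_int.mono' hb_meas.aestronglyMeasurable ?_
    filter_upwards [hae, hb_eq] with ω hω heq
    rw [← heq]
    have h1 : ‖∑' i, bterm P α A ω i‖ ≤ ∑' i, ‖bterm P α A ω i‖ :=
      norm_tsum_le_tsum_norm (by simpa [Real.norm_eq_abs] using hω)
    refine h1.trans (le_of_eq ?_)
    have h2 : ENNReal.ofReal (∑' i, ‖bterm P α A ω i‖)
        = ∑' i, (‖bterm P α A ω i‖₊ : ℝ≥0∞) := by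
      rw [ENNReal.ofReal_tsum_of_nonneg (fun i => norm_nonneg _)
        (by simpa [Real.norm_eq_abs] using hω)]
      congr 1
      funext i
      exact ofReal_norm_eq_enorm _
    rw [← h2, ENNReal.toReal_ofReal (tsum_nonneg fun i => norm_nonneg _)]
  have hb_integral : ∫ ω, b ω ∂μ = 0 := by
    rw [← integral_congr_ae hb_eq,
      ← integral_tsum_of_summable_integral_norm hint hnorm_sum]
    simp [hi0]
  refine ⟨hb_int, hb_integral, ?_⟩
  obtain ⟨ω, hω⟩ := exists_integral_le hb_int
  exact ⟨ω, hb_integral ▸ hω⟩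


theorem stmt2 {Ω : Type*} [m : MeasurableSpace Ω] (C : Set (Set Ω)) (P : Set Ω → ℝ)
    (hC : IsSetField C) (hP : IsCAProb C P)
    (hm : m = MeasurableSpace.generateFrom C)
    (μ : Measure Ω) [IsProbabilityMeasure μ]
    (hμ : ∀ A ∈ C, μ A = ENNReal.ofReal (P A)) :
    (∀ α A, System2 C P α A → ∀ b : Ω → ℝ,
      (∀ ω, SeriesTendsTo (bterm P α A ω) (b ω)) →
      Integrable b μ ∧ ∫ ω, b ω ∂μ = 0 ∧ ∃ ω, 0 ≤ b ω) ∧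
    CoherentIn P (System2 C P) := by
  have hkey := aux_key C P hP hm μ hμ
  refine ⟨hkey, ?_⟩
  rintro ⟨α, A, hS, ε, hε, h⟩
  choose L hL1 hL2 using h
  obtain ⟨_, _, ω, hω⟩ := hkey α A hS L hL1
  linarith [hL2 ω]
end

section
/- Let Ω = (0,1), A_i = (0, 1/(i+1)), 𝒞 = {A_i : i ≥ 1}, and P(A_i) = 1/(i+1) + δ with δ > 0 and P(A_i) ≤ 1. Then P is coherent in betting system 2 on 𝒞: no portfolio (β_i, B_i) with B_i ∈ 𝒞, Σ|β_i|P(B_i) < ∞ and pointwise-convergent balance yields uniform sure loss. -/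
open Filter MeasureTheory ENNReal

variable {Ω : Type*}

abbrev Ω01 : Type := Set.Ioo (0:ℝ) 1

def A01 (i : ℕ) : Set Ω01 := {ω | (ω : ℝ) < 1 / ((i : ℝ) + 1)}


noncomputable def wgt (δ : ℝ) (m : ℕ) : ℝ :=
  if m = 0 then δ else 1/(m:ℝ) - 1/((m:ℝ)+1) - (if m = 1 then δ else 0)

lemma wgt_nonneg {δ : ℝ} (h0 : 0 ≤ δ) (h2 : δ ≤ 1/2) (m : ℕ) : 0 ≤ wgt δ m := by
  unfold wgt
  rcases m with _ | _ | m
  · simpa using h0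
  · norm_num; linarith
  · have h1 : (0:ℝ) < (m:ℝ) + 2 := by positivity
    have h3 : (0:ℝ) < (m:ℝ) + 2 + 1 := by positivity
    simp only [Nat.succ_ne_zero, if_false, show ¬ (m + 2 = 1) by omega]
    push_cast
    rw [sub_zero, sub_nonneg]
    apply one_div_le_one_div_of_le (by positivity) (by linarith)

lemma hasSum_tele (f : ℕ → ℝ) (l : ℝ) (h : Tendsto f atTop (nhds l))
    (hmono : ∀ n, f (n+1) ≤ f n) :
    HasSum (fun n => f n - f (n+1)) (f 0 - l) := by
  rw [hasSum_iff_tendsto_nat_of_nonneg (fun n => by linarith [hmono n])]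
  have heq : (fun n : ℕ => ∑ i ∈ Finset.range n, (f i - f (i+1))) = fun n => f 0 - f n := by
    funext n; exact Finset.sum_range_sub' f n
  rw [heq]
  exact tendsto_const_nhds.sub h

lemma tendsto_invmax (a : ℕ) :
    Tendsto (fun m : ℕ => 1/((max m a : ℕ) : ℝ)) atTop (nhds 0) := by
  apply Tendsto.congr' _ tendsto_one_div_atTop_nhds_zero_nat
  filter_upwards [Filter.eventually_ge_atTop a] with m hm
  rw [max_eq_left hm]

lemma invmax_antitone (a : ℕ) (ha : 1 ≤ a) (n : ℕ) :
    1/((max (n+1) a : ℕ) : ℝ) ≤ 1/((max n a : ℕ) : ℝ) := by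
  have hpos : 0 < max n a := Nat.lt_of_lt_of_le ha (Nat.le_max_right n a)
  apply one_div_le_one_div_of_le (by exact_mod_cast hpos)
  exact_mod_cast max_le_max (Nat.le_succ n) (le_refl a)

lemma wgt_hasSum_tail (δ : ℝ) (a : ℕ) (ha : 1 ≤ a) :
    HasSum (fun m => wgt δ m * (if m = 0 ∨ a < m then 1 else 0)) (δ + 1/((a:ℝ)+1)) := by
  set f : ℕ → ℝ := fun m => 1/((max m (a+1) : ℕ) : ℝ) with hf
  have hfa : ∀ m : ℕ, a + 1 ≤ m → f m = 1/(m:ℝ) := fun m hm => by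
    simp only [hf, Nat.max_eq_left hm]
  have hfb : ∀ m : ℕ, m ≤ a + 1 → f m = 1/((a:ℝ)+1) := fun m hm => by
    simp only [hf, Nat.max_eq_right hm]; push_cast; ring_nf
  have htele : HasSum (fun m => f m - f (m+1)) (1/((a:ℝ)+1)) := by
    have h0 : f 0 = 1/((a:ℝ)+1) := hfb 0 (by omega)
    have := hasSum_tele f 0 (tendsto_invmax (a+1)) (invmax_antitone (a+1) (by omega))
    rwa [h0, sub_zero] at this
  have hsum := (hasSum_ite_eq 0 δ).add htele
  have hfun : (fun m => wgt δ m * (if m = 0 ∨ a < m then 1 else 0))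
      = fun m => (if m = 0 then δ else 0) + (f m - f (m+1)) := by
    funext m
    rcases Nat.eq_zero_or_pos m with rfl | hm
    · rw [hfb 0 (by omega), hfb 1 (by omega)]
      simp [wgt]
    rcases le_or_gt m a with hma | hma
    · rw [hfb m (by omega), hfb (m+1) (by omega)]
      have h1 : ¬ (m = 0 ∨ a < m) := by omega
      rw [if_neg h1, mul_zero, if_neg (show ¬ m = 0 by omega)]
      ring
    · have hm2 : 2 ≤ m := by omega
      rw [hfa m (by omega), hfa (m+1) (by omega)]
      rw [if_pos (Or.inr hma), mul_one]
      unfold wgt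
      rw [if_neg (by omega : ¬ m = 0), if_neg (by omega : ¬ m = 1)]
      rw [if_neg (by omega : ¬ m = 0)]
      push_cast
      ring
  rw [hfun]
  exact hsum

lemma wgt_hasSum_one (δ : ℝ) : HasSum (wgt δ) 1 := by
  set f : ℕ → ℝ := fun m => 1/((max m 1 : ℕ) : ℝ) with hf
  have htele : HasSum (fun m => f m - f (m+1)) 1 := by
    have h0 : f 0 = 1 := by simp [hf]
    have := hasSum_tele f 0 (tendsto_invmax 1) (invmax_antitone 1 le_rfl)
    rwa [h0, sub_zero] at this
  have hsum := ((hasSum_ite_eq 0 δ).sub (hasSum_ite_eq 1 δ)).add htele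
  have hval : δ - δ + 1 = (1:ℝ) := by ring
  rw [hval] at hsum
  have hga : ∀ m : ℕ, 1 ≤ m → f m = 1/(m:ℝ) := fun m hm => by
    simp only [hf, Nat.max_eq_left hm]
  have hgb : f 0 = 1 := by simp [hf]
  have hfun : wgt δ
      = fun m => ((if m = 0 then δ else 0) - (if m = 1 then δ else 0)) + (f m - f (m+1)) := by
    funext m
    rcases Nat.eq_zero_or_pos m with rfl | hm
    · rw [hgb, hga 1 (by omega)]
      simp [wgt]
    · rw [hga m (by omega), hga (m+1) (by omega)]
      unfold wgt
      split_ifs <;> first | omega | (push_cast; ring)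
  rw [hfun]
  exact hsum

theorem stmt5 (δ : ℝ) (hδ : 0 < δ) (P : Set Ω01 → ℝ)
    (hP : ∀ i, 1 ≤ i → P (A01 i) = 1 / ((i : ℝ) + 1) + δ)
    (hle : ∀ i, 1 ≤ i → P (A01 i) ≤ 1) :
    CoherentIn P (System2 {S | ∃ i, 1 ≤ i ∧ S = A01 i} P) := by
  rintro ⟨α, A, ⟨hAC, hSum, -⟩, ε, hε, hloss⟩
  have hAC' : ∀ i, ∃ j, 1 ≤ j ∧ A i = A01 j := hAC
  choose k hk1 hkA using hAC'
  have hδ2 : δ ≤ 1 / 2 := by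
    have h1 := hle 1 le_rfl
    rw [hP 1 le_rfl] at h1
    norm_num at h1
    linarith
  have hkpos : ∀ i, (0:ℝ) < (k i : ℝ) + 1 := fun i => by positivity
  have hPA : ∀ i, P (A i) = 1 / ((k i : ℝ) + 1) + δ := fun i => by
    rw [hkA i]; exact hP _ (hk1 i)
  have hPle1 : ∀ i, P (A i) ≤ 1 := fun i => by rw [hkA i]; exact hle _ (hk1 i)
  have hP0 : ∀ i, 0 ≤ P (A i) := fun i => by
    rw [hPA i]
    have h2 : 0 < 1 / ((k i : ℝ) + 1) := by positivity
    linarith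
  have hα : Summable fun i => |α i| := by
    refine Summable.of_nonneg_of_le (fun i => abs_nonneg _) (fun i => ?_) (hSum.mul_left δ⁻¹)
    have h1 : |α i| * δ ≤ |α i| * P (A i) := by
      apply mul_le_mul_of_nonneg_left _ (abs_nonneg _)
      rw [hPA i]
      have h2 : 0 < 1 / ((k i : ℝ) + 1) := by positivity
      linarith
    calc |α i| = δ⁻¹ * (|α i| * δ) := by field_simp
    _ ≤ δ⁻¹ * (|α i| * P (A i)) := mul_le_mul_of_nonneg_left h1 (by positivity)
  set c : ℕ → ℕ → ℝ := fun m i => if m = 0 ∨ k i < m then 1 else 0 with hc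
  have hc01 : ∀ m i, 0 ≤ c m i ∧ c m i ≤ 1 := fun m i => by
    simp only [hc]; split_ifs <;> norm_num
  have hcP : ∀ m i, |c m i - P (A i)| ≤ 1 := fun m i => by
    rw [abs_le]
    refine ⟨?_, ?_⟩
    · have h1 := (hc01 m i).1; have h2 := hPle1 i; linarith
    · have h1 := (hc01 m i).2; have h2 := hP0 i; linarith
  set g : ℕ → ℝ := fun m => ∑' i, α i * (c m i - P (A i)) with hg
  have hterm : ∀ m, Summable fun i => α i * (c m i - P (A i)) := fun m => by
    apply Summable.of_norm_bounded hα
    intro i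
    rw [Real.norm_eq_abs, abs_mul]
    calc |α i| * |c m i - P (A i)| ≤ |α i| * 1 :=
      mul_le_mul_of_nonneg_left (hcP m i) (abs_nonneg _)
    _ = |α i| := mul_one _
  have hg1 : ∀ m, 1 ≤ m → g m ≤ -ε := by
    intro m hm
    have hmem : (1:ℝ) / ((m:ℝ)+1) ∈ Set.Ioo (0:ℝ) 1 := by
      constructor
      · positivity
      · rw [div_lt_one (by positivity)]
        have h3 : (1:ℝ) ≤ (m:ℝ) := by exact_mod_cast hm
        linarith
    set ω : Ω01 := ⟨1/((m:ℝ)+1), hmem⟩ with hω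
    have hind : ∀ i, ind (A i) ω = c m i := by
      intro i
      rw [hkA i]
      have hiff : ω ∈ A01 (k i) ↔ k i < m := by
        show ((ω:ℝ) < 1/((k i : ℝ)+1)) ↔ _
        rw [hω]
        show (1/((m:ℝ)+1) < 1/((k i : ℝ)+1)) ↔ _
        rw [div_lt_div_iff₀ (by positivity) (hkpos i)]
        constructor
        · intro h; by_contra hcon; push_neg at hcon
          have h4 : (m:ℝ) ≤ (k i : ℝ) := by exact_mod_cast hcon
          linarith
        · intro h
          have h4 : (k i : ℝ) < (m:ℝ) := by exact_mod_cast h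
          linarith
      unfold ind
      by_cases hkm : k i < m
      · rw [Set.indicator_of_mem (hiff.mpr hkm)]
        simp only [hc]
        rw [if_pos (Or.inr hkm)]
      · rw [Set.indicator_of_notMem (fun hmem' => hkm (hiff.mp hmem'))]
        simp only [hc]
        rw [if_neg]
        push_neg
        exact ⟨by omega, by omega⟩
    have hbt : ∀ i, bterm P α A ω i = α i * (c m i - P (A i)) := fun i => by
      unfold bterm
      rw [hind i]
    obtain ⟨L, hL, hLe⟩ := hloss ω
    have hsble : Summable (bterm P α A ω) :=
      (hterm m).congr fun i => (hbt i).symm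
    have hLt : Tendsto (fun n => ∑ i ∈ Finset.range n, bterm P α A ω i) atTop
        (nhds (∑' i, bterm P α A ω i)) := hsble.hasSum.tendsto_sum_nat
    have hLeq : L = ∑' i, bterm P α A ω i := tendsto_nhds_unique hL hLt
    have heq : g m = ∑' i, bterm P α A ω i := by
      simp only [hg]
      exact tsum_congr fun i => (hbt i).symm
    rw [heq, ← hLeq]; exact hLe
  have hg0 : g 0 ≤ -ε := by
    have hten : Tendsto (fun n => g (n+1)) atTop (nhds (g 0)) := by
      simp only [hg]
      refine tendsto_tsum_of_dominated_convergence (𝓕 := atTop)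
        (f := fun n i => α i * (c (n+1) i - P (A i)))
        (g := fun i => α i * (c 0 i - P (A i))) (bound := fun i => |α i|) hα ?_ ?_
      · intro i
        apply Tendsto.congr' _ tendsto_const_nhds
        filter_upwards [Filter.eventually_ge_atTop (k i)] with n hn
        have h1 : c (n+1) i = 1 := by simp only [hc]; rw [if_pos (Or.inr (by omega))]
        have h0 : c 0 i = 1 := by simp [hc]
        rw [h1, h0]
      · filter_upwards with n i
        rw [Real.norm_eq_abs, abs_mul]
        calc |α i| * |c (n+1) i - P (A i)| ≤ |α i| * 1 :=
          mul_le_mul_of_nonneg_left (hcP (n+1) i) (abs_nonneg _)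
        _ = |α i| := mul_one _
    exact le_of_tendsto hten (Filter.Eventually.of_forall fun n => hg1 (n+1) (by omega))
  set F : ℕ × ℕ → ℝ := fun p => wgt δ p.1 * (α p.2 * (c p.1 p.2 - P (A p.2))) with hF
  have hwsum : Summable (wgt δ) := (wgt_hasSum_one δ).summable
  have hwnn : ∀ m, 0 ≤ wgt δ m := wgt_nonneg (le_of_lt hδ) hδ2
  have hFsum : Summable F := by
    apply Summable.of_norm_bounded
      (hwsum.mul_of_nonneg hα hwnn fun i => abs_nonneg _)
    intro p
    simp only [hF]
    rw [Real.norm_eq_abs, abs_mul, abs_mul, abs_of_nonneg (hwnn p.1)]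
    apply mul_le_mul_of_nonneg_left _ (hwnn p.1)
    calc |α p.2| * |c p.1 p.2 - P (A p.2)| ≤ |α p.2| * 1 :=
      mul_le_mul_of_nonneg_left (hcP p.1 p.2) (abs_nonneg _)
    _ = |α p.2| := mul_one _
  have hinner : ∀ i, HasSum (fun m => F (m, i)) 0 := by
    intro i
    have h1 : HasSum (fun m => wgt δ m * c m i) (δ + 1/((k i : ℝ)+1)) := by
      simp only [hc]
      exact wgt_hasSum_tail δ (k i) (hk1 i)
    have h2 := (h1.mul_left (α i)).sub ((wgt_hasSum_one δ).mul_left (α i * P (A i)))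
    have hfe : (fun m => α i * (wgt δ m * c m i) - α i * P (A i) * wgt δ m)
        = fun m => F (m, i) := by
      funext m
      simp only [hF]
      ring
    rw [hfe] at h2
    have hzero : α i * (δ + 1/((k i : ℝ)+1)) - α i * P (A i) * 1 = 0 := by
      rw [hPA i]; ring
    rwa [hzero] at h2
  have hrow : ∀ m, ∑' i, F (m, i) = wgt δ m * g m := fun m => by
    simp only [hF, hg]
    rw [tsum_mul_left]
  have hswap : ∑' m, ∑' i, F (m, i) = 0 := by
    have hcomm : ∑' (i : ℕ), ∑' (m : ℕ), F (m, i) = ∑' (m : ℕ), ∑' (i : ℕ), F (m, i) :=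
      Summable.tsum_comm (f := fun m i => F (m, i)) hFsum
    rw [← hcomm]
    have hz : ∀ i : ℕ, ∑' (m : ℕ), F (m, i) = 0 := fun i => (hinner i).tsum_eq
    rw [tsum_congr hz, tsum_zero]
  have hsum1 : Summable fun m => wgt δ m * g m :=
    hFsum.prod.congr hrow
  have hle2 : ∑' m, wgt δ m * g m ≤ ∑' m, wgt δ m * (-ε) := by
    apply Summable.tsum_le_tsum _ hsum1 (hwsum.mul_right _)
    intro m
    apply mul_le_mul_of_nonneg_left _ (hwnn m)
    rcases Nat.eq_zero_or_pos m with rfl | hm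
    · exact hg0
    · exact hg1 m hm
  have hrhs : ∑' m, wgt δ m * (-ε) = -ε := by
    rw [tsum_mul_right, (wgt_hasSum_one δ).tsum_eq, one_mul]
  have hlhs : ∑' m, wgt δ m * g m = 0 := by
    rw [← hswap]
    exact tsum_congr fun m => (hrow m).symm
  rw [hlhs, hrhs] at hle2
  linarith
end

section
/- Let 𝒞 be a field on Ω and P a price assignment. If P is coherent in betting system 3, then P is a countably additive probability and there is no infinite sequence of pairwise disjoint sets in 𝒞 of positive P-probability (equivalently, Ω partitions into finitely many 𝒞-measurable atoms). -/
open Filter MeasureTheory ENNReal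

variable {Ω : Type*}

lemma ep_h (t : ℕ) : ∃ k, t < (k+1)*(k+2) := ⟨t, by nlinarith⟩

def ep (t : ℕ) : ℕ := Nat.find (ep_h t)

lemma ep_spec (t : ℕ) : t < (ep t + 1)*(ep t + 2) ∧ ∀ k < ep t, ¬ t < (k+1)*(k+2) :=
  ⟨Nat.find_spec (ep_h t), fun k hk => Nat.find_min (ep_h t) hk⟩

lemma ep_lt (t : ℕ) : t < (ep t + 1) * (ep t + 2) := (ep_spec t).1

lemma ep_le (t : ℕ) : ep t * (ep t + 1) ≤ t := by
  rcases Nat.eq_zero_or_pos (ep t) with h | h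
  · simp [h]
  · have hm := (ep_spec t).2 (ep t - 1) (by omega)
    have h1 : ep t - 1 + 1 = ep t := by omega
    have h2 : ep t - 1 + 2 = ep t + 1 := by omega
    rw [h1, h2] at hm
    omega

lemma ep_eq {k t : ℕ} (h1 : k*(k+1) ≤ t) (h2 : t < (k+1)*(k+2)) : ep t = k := by
  rcases lt_trichotomy (ep t) k with hlt | heq | hgt
  · have hle : (ep t + 1)*(ep t + 2) ≤ k*(k+1) := Nat.mul_le_mul (by omega) (by omega)
    exact absurd (lt_of_lt_of_le (ep_lt t) (le_trans hle h1)) (lt_irrefl t)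
  · exact heq
  · exact absurd h2 ((ep_spec t).2 k hgt)

lemma le_ep {a t : ℕ} (h : a*(a+1) ≤ t) : a ≤ ep t := by
  by_contra h'
  have hle : (ep t + 1)*(ep t + 2) ≤ a*(a+1) := Nat.mul_le_mul (by omega) (by omega)
  exact absurd (lt_of_lt_of_le (ep_lt t) (le_trans hle h)) (lt_irrefl t)

lemma ep_tendsto : Tendsto ep atTop atTop :=
  tendsto_atTop_atTop.2 fun b => ⟨b*(b+1), fun t ht => le_ep ht⟩

lemma m_le (t : ℕ) : t - ep t * (ep t + 1) ≤ 2*(ep t) + 1 := by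
  have h1 := ep_le t
  have h2 := ep_lt t
  have hx : (ep t + 1)*(ep t + 2) = ep t*(ep t + 1) + (2*(ep t)+2) := by ring
  omega

lemma ep_step (N : ℕ) :
    (ep (N+1) = ep N ∧ N+1 - ep (N+1)*(ep (N+1)+1) = (N - ep N*(ep N+1)) + 1)
  ∨ (N - ep N*(ep N+1) = 2*(ep N)+1 ∧ ep (N+1) = ep N + 1 ∧
      N+1 - ep (N+1)*(ep (N+1)+1) = 0) := by
  have h1 := ep_le N
  have h2 := ep_lt N
  set k := ep N with hk
  have q0 : k*(k+1) = k*k + k := by ring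
  have q1 : (k+1)*(k+2) = k*k + 3*k + 2 := by ring
  have q2 : (k+1)*((k+1)+1) = k*k+3*k+2 := by ring
  have q3 : ((k+1)+1)*((k+1)+2) = k*k+5*k+6 := by ring
  by_cases hc : N - k*(k+1) = 2*k+1
  · right
    have he : ep (N+1) = k+1 := ep_eq (by omega) (by omega)
    refine ⟨hc, he, ?_⟩
    rw [he]
    omega
  · left
    have he : ep (N+1) = k := ep_eq (by omega) (by omega)
    refine ⟨he, ?_⟩
    rw [he]
    omega

lemma ep_zero : ep 0 = 0 := ep_eq (by norm_num) (by norm_num)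

noncomputable def aw (k : ℕ) : ℝ := 1/((k:ℝ)+2)
noncomputable def bw (k : ℕ) : ℝ := (k:ℝ)/(((k:ℝ)+1)^2)

noncomputable def gfun (t : ℕ) : ℝ :=
  if (t - ep t * (ep t+1)) % 2 = 0 then aw (ep t) else -bw (ep t)

noncomputable def Gval (k m : ℕ) : ℝ :=
  (k:ℝ)/((k:ℝ)+1) + (((m+1)/2 : ℕ) : ℝ) * aw k - ((m/2 : ℕ) : ℝ) * bw k

lemma G_formula (N : ℕ) :
    ∑ t ∈ Finset.range N, gfun t = Gval (ep N) (N - ep N*(ep N+1)) := by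
  induction N with
  | zero => simp [Gval, ep_zero, aw, bw]
  | succ N ih =>
    rw [Finset.sum_range_succ, ih]
    rcases ep_step N with ⟨he, hm⟩ | ⟨hm2k, he, hm0⟩
    · rw [hm, he]
      set k := ep N with hk
      set m := N - k*(k+1) with hmdef
      have hg : gfun N = if m % 2 = 0 then aw k else -bw k := rfl
      rcases Nat.even_or_odd m with ⟨q, hq⟩ | ⟨q, hq⟩
      · have hq' : m = 2*q := by omega
        rw [hg, if_pos (by omega), hq']
        have d1 : (2*q+1)/2 = q := by omega
        have d2 : (2*q)/2 = q := by omega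
        have d3 : (2*q+1+1)/2 = q+1 := by omega
        unfold Gval
        rw [d1, d2, d3]
        push_cast
        ring
      · rw [hg, if_neg (by omega), hq]
        have d1 : (2*q+1+1)/2 = q+1 := by omega
        have d2 : (2*q+1)/2 = q := by omega
        have d3 : (2*q+1+1+1)/2 = q+1 := by omega
        unfold Gval
        rw [d1, d2, d3]
        push_cast
        ring
    · rw [hm0, he]
      set k := ep N with hk
      have hg : gfun N = if (N - k*(k+1)) % 2 = 0 then aw k else -bw k := rfl
      rw [hg, hm2k, if_neg (by omega)]
      have d1 : (2*k+1+1)/2 = k+1 := by omega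
      have d2 : (2*k+1)/2 = k := by omega
      have d3 : (0+1)/2 = 0 := by omega
      unfold Gval
      rw [d1, d2, d3]
      have h1 : ((k:ℝ)+1) ≠ 0 := by positivity
      have h2 : ((k:ℝ)+2) ≠ 0 := by positivity
      have h3 : ((k:ℝ)+3) ≠ 0 := by positivity
      unfold aw bw
      push_cast
      field_simp
      ring

lemma Gval_bound (k m : ℕ) (hm : m ≤ 2*k+1) : |Gval k m - 1| ≤ 3/((k:ℝ)+1) := by
  have hc1 : (m+1)/2 ≤ k+1 := by omega
  have hd1 : m/2 ≤ k := by omega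
  have hcd : m/2 ≤ (m+1)/2 := by omega
  have hcd2 : (m+1)/2 ≤ m/2 + 1 := by omega
  set c := (m+1)/2 with hc
  set d := m/2 with hd
  have hk1 : (0:ℝ) < (k:ℝ)+1 := by positivity
  have hk2 : (0:ℝ) < (k:ℝ)+2 := by positivity
  have hcr : ((c:ℕ):ℝ) ≤ ((d:ℕ):ℝ)+1 := by exact_mod_cast hcd2
  have hdc : ((d:ℕ):ℝ) ≤ ((c:ℕ):ℝ) := by exact_mod_cast hcd
  have hdK : ((d:ℕ):ℝ) ≤ (k:ℝ) := by exact_mod_cast hd1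
  have hd0 : (0:ℝ) ≤ ((d:ℕ):ℝ) := by positivity
  have hden : (0:ℝ) < ((k:ℝ)+1)^2*((k:ℝ)+2) := by positivity
  have key : Gval k m - 1 =
      ((c:ℝ)*((k:ℝ)+1)^2 - (d:ℝ)*(k:ℝ)*((k:ℝ)+2) - ((k:ℝ)+1)*((k:ℝ)+2))
        / (((k:ℝ)+1)^2*((k:ℝ)+2)) := by
    unfold Gval aw bw
    field_simp
    ring
  rw [key, abs_div, abs_of_pos hden, div_le_div_iff₀ hden hk1]
  have e0 : (0:ℝ) ≤ ((c:ℝ) - d) := by linarith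
  have e1 : ((c:ℝ) - d) ≤ 1 := by linarith
  have p1 : (0:ℝ) ≤ ((c:ℝ) - d) * ((k:ℝ)+1)^2 := by positivity
  have p2 : ((c:ℝ) - d) * ((k:ℝ)+1)^2 ≤ ((k:ℝ)+1)^2 := by nlinarith [sq_nonneg ((k:ℝ)+1)]
  have hnum : |(c:ℝ)*((k:ℝ)+1)^2 - (d:ℝ)*(k:ℝ)*((k:ℝ)+2) - ((k:ℝ)+1)*((k:ℝ)+2)|
      ≤ 3*(((k:ℝ)+1)*((k:ℝ)+2)) := by
    rw [abs_le]
    constructor <;> nlinarith [hd0, hdK, hk1, hk2, p1, p2, mul_pos hk1 hk2]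
  calc |(c:ℝ)*((k:ℝ)+1)^2 - (d:ℝ)*(k:ℝ)*((k:ℝ)+2) - ((k:ℝ)+1)*((k:ℝ)+2)| * ((k:ℝ)+1)
      ≤ 3*(((k:ℝ)+1)*((k:ℝ)+2)) * ((k:ℝ)+1) :=
        mul_le_mul_of_nonneg_right hnum (le_of_lt hk1)
    _ = 3 * (((k:ℝ)+1)^2*((k:ℝ)+2)) := by ring

lemma stt_aux : Tendsto (fun k : ℕ => 3/((k:ℝ)+1)) atTop (nhds 0) := by
  have h := tendsto_one_div_add_atTop_nhds_zero_nat.const_mul (3:ℝ)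
  simp only [mul_zero] at h
  refine h.congr fun n => ?_
  ring

lemma G_tendsto : Tendsto (fun N => ∑ t ∈ Finset.range N, gfun t) atTop (nhds 1) := by
  have hb : ∀ N, ‖(∑ t ∈ Finset.range N, gfun t) - 1‖ ≤ 3/((ep N : ℝ)+1) := by
    intro N
    rw [G_formula, Real.norm_eq_abs]
    exact Gval_bound _ _ (m_le N)
  have h0 : Tendsto (fun N => 3/((ep N:ℝ)+1)) atTop (nhds 0) :=
    stt_aux.comp ep_tendsto
  have h := squeeze_zero_norm hb h0
  have h2 := h.add_const (1:ℝ)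
  simp only [zero_add, sub_add_cancel] at h2
  exact h2

noncomputable def hterm (j t : ℕ) : ℝ :=
  if (t - ep t*(ep t+1)) % 2 = 0 then (if ep t + 1 = j then aw (ep t) else 0)
  else (if ep t = j then -bw (ep t) else 0)

noncomputable def Hval (j k m : ℕ) : ℝ :=
  if k + 1 < j then 0
  else if k + 1 = j then (((m+1)/2 : ℕ) : ℝ) * aw k
  else if k = j then (j:ℝ)/((j:ℝ)+1) - ((m/2 : ℕ) : ℝ) * bw j
  else 0

lemma Hval_step_even (j k q : ℕ) :
    Hval j k (2*q+1) = Hval j k (2*q) + (if k + 1 = j then aw k else 0) := by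
  have d1 : (2*q+1)/2 = q := by omega
  have d2 : (2*q)/2 = q := by omega
  have d3 : (2*q+1+1)/2 = q+1 := by omega
  unfold Hval
  rw [d1, d2, d3]
  split_ifs with h1 h2 h3 <;> first
    | (exfalso; omega)
    | (push_cast; ring)

lemma Hval_step_odd (j k q : ℕ) :
    Hval j k (2*q+1+1) = Hval j k (2*q+1) + (if k = j then -bw k else 0) := by
  have d1 : (2*q+1)/2 = q := by omega
  have d2 : (2*q+1+1)/2 = q+1 := by omega
  have d3 : (2*q+1+1+1)/2 = q+1 := by omega
  unfold Hval
  rw [d1, d2, d3]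
  split_ifs
  all_goals try (exfalso; omega)
  all_goals subst_vars
  all_goals push_cast
  all_goals ring

lemma Hval_boundary (j k : ℕ) :
    Hval j (k+1) 0 = Hval j k (2*k+1) + (if k = j then -bw k else 0) := by
  have d1 : (2*k+1+1)/2 = k+1 := by omega
  have d2 : (2*k+1)/2 = k := by omega
  have d3 : (0+1)/2 = 0 := by omega
  unfold Hval
  rw [d1, d2, d3]
  have h1 : ((k:ℝ)+1) ≠ 0 := by positivity
  have h2 : ((k:ℝ)+2) ≠ 0 := by positivity
  split_ifs
  all_goals try (exfalso; omega)
  all_goals subst_vars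
  all_goals try (push_cast; ring)
  all_goals (simp only [aw, bw]; push_cast; field_simp; try ring; try exact Or.inl trivial)

lemma Gval_step_even (k q : ℕ) : Gval k (2*q+1) = Gval k (2*q) + aw k := by
  have d1 : (2*q+1)/2 = q := by omega
  have d2 : (2*q)/2 = q := by omega
  have d3 : (2*q+1+1)/2 = q+1 := by omega
  unfold Gval
  rw [d1, d2, d3]
  push_cast; ring

lemma Gval_step_odd (k q : ℕ) : Gval k (2*q+1+1) = Gval k (2*q+1) + (-bw k) := by
  have d1 : (2*q+1)/2 = q := by omega
  have d2 : (2*q+1+1)/2 = q+1 := by omega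
  have d3 : (2*q+1+1+1)/2 = q+1 := by omega
  unfold Gval
  rw [d1, d2, d3]
  push_cast; ring

lemma Gval_boundary (k : ℕ) : Gval (k+1) 0 = Gval k (2*k+1) + (-bw k) := by
  have d1 : (2*k+1+1)/2 = k+1 := by omega
  have d2 : (2*k+1)/2 = k := by omega
  have d3 : (0+1)/2 = 0 := by omega
  unfold Gval
  rw [d1, d2, d3]
  have h1 : ((k:ℝ)+1) ≠ 0 := by positivity
  have h2 : ((k:ℝ)+2) ≠ 0 := by positivity
  have h3 : ((k:ℝ)+3) ≠ 0 := by positivity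
  unfold aw bw
  push_cast
  field_simp
  ring

lemma H_formula (j N : ℕ) :
    ∑ t ∈ Finset.range N, hterm j t = Hval j (ep N) (N - ep N*(ep N+1)) := by
  induction N with
  | zero =>
    simp only [Finset.range_zero, Finset.sum_empty, ep_zero, Nat.zero_sub, Nat.sub_zero]
    unfold Hval
    split_ifs with h1 h2 h3
    · rfl
    · norm_num
    · subst h3; norm_num [bw]
    · rfl
  | succ N ih =>
    rw [Finset.sum_range_succ, ih]
    rcases ep_step N with ⟨he, hm⟩ | ⟨hm2k, he, hm0⟩
    · rw [hm, he]
      set k := ep N with hk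
      set m := N - k*(k+1) with hmdef
      have hg : hterm j N = if m % 2 = 0 then (if k + 1 = j then aw k else 0)
          else (if k = j then -bw k else 0) := rfl
      rcases Nat.even_or_odd m with ⟨q, hq⟩ | ⟨q, hq⟩
      · have hq' : m = 2*q := by omega
        rw [hg, if_pos (by omega), hq', Hval_step_even]
      · rw [hg, if_neg (by omega), hq, Hval_step_odd]
    · rw [hm0, he]
      set k := ep N with hk
      have hg : hterm j N = if (N - k*(k+1)) % 2 = 0 then (if k + 1 = j then aw k else 0)
          else (if k = j then -bw k else 0) := rfl
      rw [hg, hm2k, if_neg (by omega), Hval_boundary]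

lemma sum_tendsto_of_eventually (f : ℕ → ℝ) (c : ℝ) (N₀ : ℕ)
    (h : ∀ n, N₀ ≤ n → ∑ i ∈ Finset.range n, f i = c) :
    Tendsto (fun n => ∑ i ∈ Finset.range n, f i) atTop (nhds c) := by
  refine Tendsto.congr' ?_ (tendsto_const_nhds : Tendsto (fun _ : ℕ => c) atTop (nhds c))
  filter_upwards [eventually_ge_atTop N₀] with n hn
  exact (h n hn).symm

lemma H_zero (j N : ℕ) (hN : (j+1)*(j+2) ≤ N) : ∑ t ∈ Finset.range N, hterm j t = 0 := by
  have hep : j + 1 ≤ ep N := le_ep (by calc (j+1)*((j+1)+1) = (j+1)*(j+2) := by ring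
                                        _ ≤ N := hN)
  rw [H_formula]
  unfold Hval
  rw [if_neg (by omega), if_neg (by omega), if_neg (by omega)]

lemma H_tendsto (j : ℕ) :
    Tendsto (fun N => ∑ t ∈ Finset.range N, hterm j t) atTop (nhds 0) :=
  sum_tendsto_of_eventually _ 0 ((j+1)*(j+2)) (fun n hn => H_zero j n hn)

section Helpers
variable {Ω : Type*} {C : Set (Set Ω)} {P : Set Ω → ℝ}

lemma ind_nonneg (A : Set Ω) (ω : Ω) : 0 ≤ ind A ω :=
  Set.indicator_nonneg (fun _ _ => zero_le_one) ω

lemma ind_mem {A : Set Ω} {ω : Ω} (h : ω ∈ A) : ind A ω = 1 :=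
  Set.indicator_of_mem h _

lemma ind_not_mem {A : Set Ω} {ω : Ω} (h : ω ∉ A) : ind A ω = 0 :=
  Set.indicator_of_notMem h _

lemma stt_of_eventually {f : ℕ → ℝ} {c : ℝ} (N : ℕ)
    (h : ∀ n, N ≤ n → ∑ i ∈ Finset.range n, f i = c) : SeriesTendsTo f c :=
  sum_tendsto_of_eventually f c N h

lemma sum_range_eq_of_support (f : ℕ → ℝ) (K : ℕ) (hf : ∀ i, K ≤ i → f i = 0) :
    ∀ n, K ≤ n → ∑ i ∈ Finset.range n, f i = ∑ i ∈ Finset.range K, f i := by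
  intro n hn
  exact (Finset.sum_subset (Finset.range_subset_range.2 hn)
    (fun x _ hx => hf x (le_of_not_gt (fun hlt => hx (Finset.mem_range.2 hlt))))).symm

lemma stt_finsupp (f : ℕ → ℝ) (K : ℕ) (hf : ∀ i, K ≤ i → f i = 0) :
    SeriesTendsTo f (∑ i ∈ Finset.range K, f i) :=
  stt_of_eventually K (sum_range_eq_of_support f K hf)

lemma bterm_supp (P : Set Ω → ℝ) (α : ℕ → ℝ) (A : ℕ → Set Ω) (ω : Ω) (K : ℕ)
    (h : ∀ i, K ≤ i → α i = 0) : ∀ i, K ≤ i → bterm P α A ω i = 0 :=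
  fun i hi => by simp [bterm, h i hi]

lemma no_neg_const (hcoh : CoherentIn P (System3 C P)) (α : ℕ → ℝ) (A : ℕ → Set Ω)
    (hA : ∀ i, A i ∈ C) (hp : SeriesConv (fun i => α i * P (A i)))
    {ε : ℝ} (hε : 0 < ε)
    (h : ∀ ω, ∃ L, SeriesTendsTo (bterm P α A ω) L ∧ L ≤ -ε) : False :=
  hcoh ⟨α, A, ⟨hA, hp, fun ω => (h ω).imp fun _ hL => hL.1⟩, ε, hε, h⟩

lemma bal_const_zero (hcoh : CoherentIn P (System3 C P)) (α : ℕ → ℝ) (A : ℕ → Set Ω)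
    (hA : ∀ i, A i ∈ C) (hp : SeriesConv (fun i => α i * P (A i)))
    {c : ℝ} (h : ∀ ω, SeriesTendsTo (bterm P α A ω) c) : c = 0 := by
  by_contra hc
  rcases lt_or_gt_of_ne hc with hlt | hgt
  · exact no_neg_const hcoh α A hA hp (neg_pos.2 hlt)
      (fun ω => ⟨c, h ω, by linarith⟩)
  · have hb : ∀ ω, SeriesTendsTo (bterm P (fun i => -α i) A ω) (-c) := by
      intro ω
      have hneg : (fun n => ∑ i ∈ Finset.range n, bterm P (fun i => -α i) A ω i)
          = fun n => -∑ i ∈ Finset.range n, bterm P α A ω i := by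
        funext n
        rw [← Finset.sum_neg_distrib]
        exact Finset.sum_congr rfl fun i _ => by simp [bterm]
      unfold SeriesTendsTo
      rw [hneg]
      exact (h ω).neg
    obtain ⟨x, hx⟩ := hp
    have hp' : SeriesConv (fun i => (fun i => -α i) i * P (A i)) := by
      refine ⟨-x, ?_⟩
      have hneg : (fun n => ∑ i ∈ Finset.range n, -α i * P (A i))
          = fun n => -∑ i ∈ Finset.range n, α i * P (A i) := by
        funext n
        rw [← Finset.sum_neg_distrib]
        exact Finset.sum_congr rfl fun i _ => by ring
      unfold SeriesTendsTo
      rw [hneg]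
      exact hx.neg
    exact no_neg_const hcoh _ A hA hp' hgt (fun ω => ⟨-c, hb ω, le_refl _⟩)

lemma inter_mem (hC : IsSetField C) {A B : Set Ω} (hA : A ∈ C) (hB : B ∈ C) :
    A ∩ B ∈ C := by
  have h := hC.2.1 _ (hC.2.2 _ (hC.2.1 A hA) _ (hC.2.1 B hB))
  rwa [Set.compl_union, compl_compl, compl_compl] at h

lemma diff_mem (hC : IsSetField C) {A B : Set Ω} (hA : A ∈ C) (hB : B ∈ C) :
    A \ B ∈ C := by
  rw [Set.diff_eq]
  exact inter_mem hC hA (hC.2.1 B hB)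

lemma partA (hC : IsSetField C) (hcoh : CoherentIn P (System3 C P)) : IsCAProb C P := by
  classical
  -- P univ = 1
  have huniv : P Set.univ = 1 := by
    have h := bal_const_zero (c := 1 - P Set.univ) hcoh
      (fun i => if i = 0 then 1 else 0) (fun _ => Set.univ) (fun _ => hC.1)
      ⟨_, stt_finsupp _ 1 (fun i hi => by simp [show i ≠ 0 by omega])⟩ ?_
    · linarith
    · intro ω
      have h := stt_finsupp (bterm P (fun i => if i = 0 then 1 else 0) (fun _ => Set.univ) ω) 1
        (bterm_supp _ _ _ _ 1 (fun i hi => by simp [show i ≠ 0 by omega]))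
      rwa [Finset.sum_range_one, show bterm P (fun i => if i = 0 then (1:ℝ) else 0)
        (fun _ => Set.univ) ω 0 = 1 - P Set.univ by
          simp [bterm, ind_mem (Set.mem_univ ω)]] at h
  -- nonneg
  have hnn : ∀ A ∈ C, 0 ≤ P A := by
    intro A hA
    by_contra hneg
    push_neg at hneg
    refine no_neg_const hcoh (fun i => if i = 0 then -1 else 0) (fun _ => A) (fun _ => hA)
      ⟨_, stt_finsupp _ 1 (fun i hi => by simp [show i ≠ 0 by omega])⟩
      (ε := -P A) (by linarith) ?_
    intro ω
    refine ⟨P A - ind A ω, ?_, by have := ind_nonneg A ω; linarith⟩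
    have h := stt_finsupp (bterm P (fun i => if i = 0 then -1 else 0) (fun _ => A) ω) 1
      (bterm_supp _ _ _ _ 1 (fun i hi => by simp [show i ≠ 0 by omega]))
    rwa [Finset.sum_range_one, show bterm P (fun i => if i = 0 then (-1:ℝ) else 0)
      (fun _ => A) ω 0 = P A - ind A ω by simp [bterm]; try ring] at h
  -- finite additivity
  have hadd : ∀ A ∈ C, ∀ B ∈ C, Disjoint A B → P (A ∪ B) = P A + P B := by
    intro A hA B hB hd
    set α : ℕ → ℝ := fun i => if i = 0 then 1 else if i = 1 then 1 else if i = 2 then -1 else 0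
      with hα
    set As : ℕ → Set Ω := fun i => if i = 0 then A else if i = 1 then B
      else if i = 2 then A ∪ B else Set.univ with hAs
    have hsupp : ∀ i, 3 ≤ i → α i = 0 := by
      intro i hi
      simp [hα, show i ≠ 0 by omega, show i ≠ 1 by omega, show i ≠ 2 by omega]
    have hmem : ∀ i, As i ∈ C := by
      intro i
      simp only [hAs]
      split_ifs
      · exact hA
      · exact hB
      · exact hC.2.2 _ hA _ hB
      · exact hC.1
    have key := bal_const_zero (c := P (A ∪ B) - P A - P B) hcoh α As hmem
      ⟨_, stt_finsupp _ 3 (fun i hi => by rw [hsupp i hi]; ring)⟩ ?_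
    · linarith
    · intro ω
      have h := stt_finsupp (bterm P α As ω) 3 (bterm_supp _ _ _ _ 3 hsupp)
      have hind : ind A ω + ind B ω = ind (A ∪ B) ω := by
        by_cases h1 : ω ∈ A
        · have h2 : ω ∉ B := fun h2 => Set.disjoint_left.1 hd h1 h2
          rw [ind_mem h1, ind_not_mem h2, ind_mem (Set.mem_union_left _ h1)]; ring
        · by_cases h2 : ω ∈ B
          · rw [ind_not_mem h1, ind_mem h2, ind_mem (Set.mem_union_right _ h2)]; ring
          · rw [ind_not_mem h1, ind_not_mem h2,
              ind_not_mem (fun hu => hu.elim h1 h2)]; ring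
      have hsum : ∑ i ∈ Finset.range 3, bterm P α As ω i = P (A ∪ B) - P A - P B := by
        rw [Finset.sum_range_succ, Finset.sum_range_succ, Finset.sum_range_one]
        simp only [bterm, hα, hAs]
        norm_num
        linarith
      rwa [hsum] at h
  -- countable additivity
  have hca : ∀ A : ℕ → Set Ω, (∀ i, A i ∈ C) → Pairwise (Function.onFun Disjoint A) →
      (⋃ i, A i) ∈ C → HasSum (fun i => P (A i)) (P (⋃ i, A i)) := by
    intro A hAmem hAdis hU
    have hempty : P ∅ = 0 := by
      have h := hadd ∅ (by simpa using hC.2.1 _ hC.1) ∅ (by simpa using hC.2.1 _ hC.1)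
        (disjoint_bot_left)
      simp at h
      linarith
    -- partial unions
    have hpu : ∀ n, (⋃ i ∈ Finset.range n, A i) ∈ C ∧
        P (⋃ i ∈ Finset.range n, A i) = ∑ i ∈ Finset.range n, P (A i) := by
      intro n
      induction n with
      | zero => simpa using ⟨by simpa using hC.2.1 _ hC.1, hempty⟩
      | succ n ih =>
        have hun : (⋃ i ∈ Finset.range (n+1), A i)
            = A n ∪ ⋃ i ∈ Finset.range n, A i := by
          rw [Finset.range_add_one, Finset.set_biUnion_insert]
        have hdisj : Disjoint (A n) (⋃ i ∈ Finset.range n, A i) := by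
          rw [Set.disjoint_iUnion₂_right]
          intro i hi
          exact hAdis (fun h => by simp at hi; omega)
        constructor
        · rw [hun]; exact hC.2.2 _ (hAmem n) _ ih.1
        · rw [hun, hadd _ (hAmem n) _ ih.1 hdisj, ih.2, Finset.sum_range_succ]; ring
    -- monotonicity
    have hmono : ∀ X ∈ C, ∀ Y ∈ C, X ⊆ Y → P X ≤ P Y := by
      intro X hX Y hY hXY
      have h := hadd X hX (Y \ X) (diff_mem hC hY hX) disjoint_sdiff_self_right
      rw [Set.union_diff_cancel hXY] at h
      have := hnn _ (diff_mem hC hY hX)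
      linarith
    have hbound : ∀ n, ∑ i ∈ Finset.range n, P (A i) ≤ P (⋃ i, A i) := by
      intro n
      rw [← (hpu n).2]
      exact hmono _ (hpu n).1 _ hU (Set.iUnion₂_subset fun i _ => Set.subset_iUnion A i)
    have hsummable : Summable (fun i => P (A i)) :=
      summable_of_sum_range_le (fun i => hnn _ (hAmem i)) hbound
    have hs := hsummable.hasSum
    set s := ∑' i, P (A i) with hsdef
    have hst : Tendsto (fun n => ∑ i ∈ Finset.range n, P (A i)) atTop (nhds s) :=
      hs.tendsto_sum_nat
    -- the infinite portfolio
    set α : ℕ → ℝ := fun i => if i = 0 then -1 else 1 with hα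
    set As : ℕ → Set Ω := fun i => if i = 0 then ⋃ i, A i else A (i - 1) with hAs
    have hmem : ∀ i, As i ∈ C := by
      intro i
      simp only [hAs]
      split_ifs
      · exact hU
      · exact hAmem _
    have hpeq : ∀ n, ∑ i ∈ Finset.range (n+1), α i * P (As i)
        = -P (⋃ i, A i) + ∑ i ∈ Finset.range n, P (A i) := by
      intro n
      rw [Finset.sum_range_succ']
      simp only [hα, hAs]
      norm_num
      try ring
    have hpt : SeriesTendsTo (fun i => α i * P (As i)) (s - P (⋃ i, A i)) := by
      unfold SeriesTendsTo
      rw [← tendsto_add_atTop_iff_nat 1]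
      have : (fun n => ∑ i ∈ Finset.range (n+1), α i * P (As i))
          = fun n => -P (⋃ i, A i) + ∑ i ∈ Finset.range n, P (A i) := funext hpeq
      rw [this]
      have h := hst.const_add (-P (⋃ i, A i))
      convert h using 2
      ring
    have hbal : ∀ ω, SeriesTendsTo (bterm P α As ω) (P (⋃ i, A i) - s) := by
      intro ω
      have hindt : Tendsto (fun n => ∑ i ∈ Finset.range n, ind (A i) ω) atTop
          (nhds (ind (⋃ i, A i) ω)) := by
        by_cases hω : ω ∈ ⋃ i, A i
        · obtain ⟨j, hj⟩ := Set.mem_iUnion.1 hω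
          rw [ind_mem hω]
          refine sum_tendsto_of_eventually _ 1 (j+1) ?_
          intro n hn
          have hterm : ∀ i, ind (A i) ω = if i = j then 1 else 0 := by
            intro i
            by_cases hij : i = j
            · subst hij; rw [ind_mem hj, if_pos rfl]
            · rw [ind_not_mem (fun h => Set.disjoint_left.1 (hAdis hij) h hj), if_neg hij]
          rw [Finset.sum_congr rfl (fun i _ => hterm i), Finset.sum_ite_eq' (Finset.range n) j]
          rw [if_pos (Finset.mem_range.2 (by omega))]
        · rw [ind_not_mem hω]
          refine sum_tendsto_of_eventually _ 0 0 ?_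
          intro n _
          refine Finset.sum_eq_zero fun i _ => ind_not_mem fun h => hω ?_
          exact Set.mem_iUnion.2 ⟨i, h⟩
      have hbeq : ∀ n, ∑ i ∈ Finset.range (n+1), bterm P α As ω i
          = -(ind (⋃ i, A i) ω - P (⋃ i, A i))
            + ((∑ i ∈ Finset.range n, ind (A i) ω) - ∑ i ∈ Finset.range n, P (A i)) := by
        intro n
        rw [Finset.sum_range_succ']
        have h0 : bterm P α As ω 0 = -(ind (⋃ i, A i) ω - P (⋃ i, A i)) := by
          simp [bterm, hα, hAs]
        have hsucc : ∀ i : ℕ, bterm P α As ω (i+1) = ind (A i) ω - P (A i) := by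
          intro i
          simp [bterm, hα, hAs]
        rw [h0, Finset.sum_congr rfl (fun i _ => hsucc i), Finset.sum_sub_distrib]
        ring
      unfold SeriesTendsTo
      rw [← tendsto_add_atTop_iff_nat 1]
      rw [show (fun n => ∑ i ∈ Finset.range (n+1), bterm P α As ω i)
          = fun n => -(ind (⋃ i, A i) ω - P (⋃ i, A i))
            + ((∑ i ∈ Finset.range n, ind (A i) ω) - ∑ i ∈ Finset.range n, P (A i))
          from funext hbeq]
      have h := (hindt.sub hst).const_add (-(ind (⋃ i, A i) ω - P (⋃ i, A i)))
      convert h using 2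
      ring
    have hzero := bal_const_zero hcoh α As hmem ⟨_, hpt⟩ hbal
    have : s = P (⋃ i, A i) := by linarith
    rwa [← this]
  exact ⟨huniv, hnn, hadd, hca⟩

lemma partB (hC : IsSetField C) (hcoh : CoherentIn P (System3 C P)) :
    ¬ ∃ A : ℕ → Set Ω, (∀ i, A i ∈ C) ∧ Pairwise (Function.onFun Disjoint A) ∧
        ∀ i, 0 < P (A i) := by
  rintro ⟨A, hmem, hdis, hpos⟩
  classical
  set B : ℕ → Set Ω := fun t =>
    if (t - ep t*(ep t+1)) % 2 = 0 then A (ep t + 1) else A (ep t) with hB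
  set β : ℕ → ℝ := fun t =>
    if (t - ep t*(ep t+1)) % 2 = 0 then aw (ep t) / P (A (ep t + 1))
    else -(bw (ep t) / P (A (ep t))) with hβ
  have hBmem : ∀ t, B t ∈ C := by
    intro t; simp only [hB]; split_ifs <;> apply hmem
  have hprice : ∀ t, β t * P (B t) = gfun t := by
    intro t
    simp only [hB, hβ, gfun]
    split_ifs with h
    · exact div_mul_cancel₀ _ (hpos _).ne'
    · rw [neg_mul, div_mul_cancel₀ _ (hpos _).ne']
  have hpt : SeriesTendsTo (fun t => β t * P (B t)) 1 := by
    unfold SeriesTendsTo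
    exact Tendsto.congr
      (fun n => Finset.sum_congr rfl fun i _ => (hprice i).symm) G_tendsto
  have hbal : ∀ ω, SeriesTendsTo (bterm P β B ω) (-1) := by
    intro ω
    by_cases hω : ∃ j, ω ∈ A j
    · obtain ⟨j, hj⟩ := hω
      have hωnot : ∀ i, i ≠ j → ω ∉ A i := fun i hij h =>
        Set.disjoint_left.1 (hdis hij) h hj
      have hteq : ∀ t, bterm P β B ω t = (1 / P (A j)) * hterm j t - gfun t := by
        intro t
        have hsplit : bterm P β B ω t = β t * ind (B t) ω - β t * P (B t) := by
          unfold bterm; ring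
        rw [hsplit, hprice]
        congr 1
        simp only [hβ, hB, hterm]
        split_ifs with h1 h2 h3
        · rw [h2, ind_mem hj]
          ring
        · rw [ind_not_mem (hωnot _ h2)]
          ring
        · rw [h3, ind_mem hj]
          ring
        · rw [ind_not_mem (hωnot _ h3)]
          ring
      have hsum_eq : ∀ n, ∑ t ∈ Finset.range n, bterm P β B ω t
          = (1 / P (A j)) * (∑ t ∈ Finset.range n, hterm j t)
            - ∑ t ∈ Finset.range n, gfun t := by
        intro n
        rw [Finset.mul_sum, ← Finset.sum_sub_distrib]
        exact Finset.sum_congr rfl fun t _ => hteq t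
      unfold SeriesTendsTo
      rw [show (fun n => ∑ t ∈ Finset.range n, bterm P β B ω t)
          = fun n => (1 / P (A j)) * (∑ t ∈ Finset.range n, hterm j t)
            - ∑ t ∈ Finset.range n, gfun t from funext hsum_eq]
      have h1 := (H_tendsto j).const_mul (1 / P (A j))
      have h2 := h1.sub G_tendsto
      simpa using h2
    · push_neg at hω
      have hteq : ∀ t, bterm P β B ω t = -gfun t := by
        intro t
        have hi : ind (B t) ω = 0 := by
          simp only [hB]; split_ifs <;> exact ind_not_mem (hω _)
        show β t * (ind (B t) ω - P (B t)) = -gfun t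
        rw [hi, ← hprice t]; ring
      unfold SeriesTendsTo
      rw [show (fun n => ∑ t ∈ Finset.range n, bterm P β B ω t)
          = fun n => -∑ t ∈ Finset.range n, gfun t from funext fun n => by
            rw [← Finset.sum_neg_distrib]
            exact Finset.sum_congr rfl fun t _ => hteq t]
      exact G_tendsto.neg
  exact no_neg_const hcoh β B hBmem ⟨1, hpt⟩ one_pos
    (fun ω => ⟨-1, hbal ω, by norm_num⟩)

end Helpers

theorem stmt8 (C : Set (Set Ω)) (P : Set Ω → ℝ) (hC : IsSetField C)
    (hcoh : CoherentIn P (System3 C P)) :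
    IsCAProb C P ∧
    ¬ ∃ A : ℕ → Set Ω, (∀ i, A i ∈ C) ∧ Pairwise (Function.onFun Disjoint A) ∧
        ∀ i, 0 < P (A i) :=
  ⟨partA hC hcoh, partB hC hcoh⟩
end

section
/- Let 𝒞 be a field, P a countably additive probability such that Ω admits a finite partition {F_1,…,F_n} into 𝒞-measurable atoms, and P* the extension of P to σ(𝒞). Then every betting portfolio in betting system 3 has balance with P*-expectation 0; hence P is coherent in betting system 3. -/
open Filter MeasureTheory ENNReal

variable {Ω : Type*}

lemma finAdd_aux {Ω : Type*} {C : Set (Set Ω)} {P : Set Ω → ℝ}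
    (hadd : ∀ A ∈ C, ∀ B ∈ C, Disjoint A B → P (A ∪ B) = P A + P B)
    (hun : ∀ A ∈ C, ∀ B ∈ C, A ∪ B ∈ C) (hempty : ∅ ∈ C) (hPempty : P ∅ = 0)
    {ι : Type*} [DecidableEq ι] (s : Finset ι) (S : ι → Set Ω) (hS : ∀ j ∈ s, S j ∈ C)
    (hdisj : ∀ j ∈ s, ∀ k ∈ s, j ≠ k → Disjoint (S j) (S k)) :
    (⋃ j ∈ s, S j) ∈ C ∧ P (⋃ j ∈ s, S j) = ∑ j ∈ s, P (S j) := by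
  induction s using Finset.induction_on with
  | empty => simpa using ⟨hempty, hPempty⟩
  | @insert a s ha ih =>
    have hSa : S a ∈ C := hS a (Finset.mem_insert_self a s)
    have ih' := ih (fun j hj => hS j (Finset.mem_insert_of_mem hj))
      (fun j hj k hk hjk => hdisj j (Finset.mem_insert_of_mem hj) k (Finset.mem_insert_of_mem hk) hjk)
    have hd : Disjoint (S a) (⋃ j ∈ s, S j) := by
      rw [Set.disjoint_iUnion₂_right]
      intro j hj
      exact hdisj a (Finset.mem_insert_self a s) j (Finset.mem_insert_of_mem hj)
        (fun h => ha (h ▸ hj))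
    rw [Finset.set_biUnion_insert, Finset.sum_insert ha]
    exact ⟨hun _ hSa _ ih'.1, by rw [hadd _ hSa _ ih'.1 hd, ih'.2]⟩

theorem stmt9 {Ω : Type*} [m : MeasurableSpace Ω] (C : Set (Set Ω)) (P : Set Ω → ℝ)
    (hC : IsSetField C) (hP : IsCAProb C P)
    (hatoms : FiniteAtomicPartition C P)
    (hm : m = MeasurableSpace.generateFrom C)
    (μ : Measure Ω) [IsProbabilityMeasure μ]
    (hμ : ∀ A ∈ C, μ A = ENNReal.ofReal (P A)) :
    (∀ α A, System3 C P α A → ∀ b : Ω → ℝ,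
      (∀ ω, SeriesTendsTo (bterm P α A ω) (b ω)) →
      Integrable b μ ∧ ∫ ω, b ω ∂μ = 0) ∧
    CoherentIn P (System3 C P) := by
  classical
  obtain ⟨hP1, hP0, hPadd, hPca⟩ := hP
  obtain ⟨huniv, hcompl, hunion⟩ := hC
  obtain ⟨n, F, hatom, hFdisj, hFunion⟩ := hatoms
  have hinter : ∀ A ∈ C, ∀ B ∈ C, A ∩ B ∈ C := by
    intro A hA B hB
    have h : A ∩ B = (Aᶜ ∪ Bᶜ)ᶜ := by rw [Set.compl_union, compl_compl, compl_compl]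
    rw [h]; exact hcompl _ (hunion _ (hcompl _ hA) _ (hcompl _ hB))
  have hmeasC : ∀ S ∈ C, MeasurableSet S := by
    intro S hS; rw [hm]; exact MeasurableSpace.measurableSet_generateFrom hS
  have hemptyC : ∅ ∈ C := by simpa using hcompl _ huniv
  have hPempty : P ∅ = 0 := by
    have := hPadd ∅ hemptyC ∅ hemptyC (disjoint_bot_left)
    simp at this; linarith
  -- main part
  have main : ∀ α A, System3 C P α A → ∀ b : Ω → ℝ,
      (∀ ω, SeriesTendsTo (bterm P α A ω) (b ω)) →
      Integrable b μ ∧ ∫ ω, b ω ∂μ = 0 := by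
    intro α A hS3 b hb
    obtain ⟨hAC, _, _⟩ := hS3
    have hatomval : ∀ (j : Fin n) (i : ℕ), P (A i ∩ F j) = P (F j) ∨ P (A i ∩ F j) = 0 :=
      fun j i => (hatom j).2.2 _ (hinter _ (hAC i) _ (hatom j).1) Set.inter_subset_right
    set G : Fin n → Set Ω := fun j => F j ∩ ⋂ i, (if P (A i ∩ F j) ≠ 0 then A i else (A i)ᶜ)
      with hGdef
    set D : Fin n → ℕ → Set Ω := fun j i => F j ∩ (if P (A i ∩ F j) ≠ 0 then (A i)ᶜ else A i)
      with hDdef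
    have hDC : ∀ j i, D j i ∈ C := by
      intro j i
      simp only [hDdef]
      by_cases h : P (A i ∩ F j) ≠ 0
      · rw [if_pos h]; exact hinter _ (hatom j).1 _ (hcompl _ (hAC i))
      · rw [if_neg h]; exact hinter _ (hatom j).1 _ (hAC i)
    have hDnull : ∀ j i, P (D j i) = 0 := by
      intro j i
      by_cases h : P (A i ∩ F j) ≠ 0
      · have hPA : P (A i ∩ F j) = P (F j) := (hatomval j i).resolve_right h
        have hsplit : (A i ∩ F j) ∪ (F j ∩ (A i)ᶜ) = F j := by
          ext ω; by_cases hω : ω ∈ A i <;> simp [hω]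
        have hdisj2 : Disjoint (A i ∩ F j) (F j ∩ (A i)ᶜ) := by
          apply Set.disjoint_left.mpr
          intro ω hω1 hω2
          exact hω2.2 hω1.1
        have := hPadd _ (hinter _ (hAC i) _ (hatom j).1) _
          (hinter _ (hatom j).1 _ (hcompl _ (hAC i))) hdisj2
        rw [hsplit, hPA] at this
        simp only [hDdef]
        rw [if_pos h]
        linarith
      · simp only [hDdef]
        rw [if_neg h, Set.inter_comm]
        exact not_not.mp h
    have hμD : ∀ j i, μ (D j i) = 0 := by
      intro j i; rw [hμ _ (hDC j i), hDnull j i, ofReal_zero]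
    have hFG : ∀ j, F j \ G j ⊆ ⋃ i, D j i := by
      intro j ω hω
      obtain ⟨hωF, hωG⟩ := hω
      have : ¬ ω ∈ ⋂ i, (if P (A i ∩ F j) ≠ 0 then A i else (A i)ᶜ) := by
        intro h; exact hωG ⟨hωF, h⟩
      rw [Set.mem_iInter] at this
      push_neg at this
      obtain ⟨i, hi⟩ := this
      refine Set.mem_iUnion.mpr ⟨i, hωF, ?_⟩
      by_cases h : P (A i ∩ F j) ≠ 0
      · rw [if_pos h] at hi ⊢
        exact hi
      · rw [if_neg h] at hi ⊢
        exact Set.not_notMem.mp (fun hc => hi hc)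
    have hμFG : ∀ j, μ (F j \ G j) = 0 := fun j =>
      measure_mono_null (hFG j) (measure_iUnion_null (hμD j))
    have hμG : ∀ j, μ (F j) ≤ μ (G j) := by
      intro j
      calc μ (F j) ≤ μ (G j ∪ (F j \ G j)) := measure_mono (by
            intro ω hω
            by_cases h : ω ∈ G j
            · exact Or.inl h
            · exact Or.inr ⟨hω, h⟩)
        _ ≤ μ (G j) + μ (F j \ G j) := measure_union_le _ _
        _ = μ (G j) := by rw [hμFG j, add_zero]
    have hGne : ∀ j, (G j).Nonempty := by
      intro j
      rw [Set.nonempty_iff_ne_empty]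
      intro h
      have h1 : μ (F j) = 0 := le_antisymm (by have := hμG j; rw [h] at this; simpa using this) (zero_le)
      rw [hμ _ (hatom j).1] at h1
      have := (hatom j).2.1
      rw [ofReal_eq_zero] at h1
      linarith
    choose w hw using hGne
    set c : Fin n → ℝ := fun j => b (w j) with hcdef
    have hindG : ∀ j, ∀ ω ∈ G j, ∀ i,
        ind (A i) ω = if P (A i ∩ F j) ≠ 0 then 1 else 0 := by
      intro j ω hω i
      have h2 := Set.mem_iInter.mp hω.2 i
      by_cases h : P (A i ∩ F j) ≠ 0
      · rw [if_pos h] at h2 ⊢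
        simp [ind, Set.indicator_apply, h2]
      · rw [if_neg h] at h2 ⊢
        simp [ind, Set.indicator_apply]
        intro hc
        exact h2 hc
    have hbtermG : ∀ j, ∀ ω ∈ G j, bterm P α A ω = bterm P α A (w j) := by
      intro j ω hω
      funext i
      simp only [bterm]
      rw [hindG j ω hω i, hindG j (w j) (hw j) i]
    have hbG : ∀ j, ∀ ω ∈ G j, b ω = c j := by
      intro j ω hω
      refine tendsto_nhds_unique (f := fun n => ∑ i ∈ Finset.range n, bterm P α A ω i) (l := atTop) (hb ω) ?_
      show SeriesTendsTo (bterm P α A ω) (c j)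
      rw [hbtermG j ω hω]
      exact hb (w j)
    set g : Ω → ℝ := fun ω => ∑ j, c j * ind (F j) ω with hgdef
    have hZ : μ ((⋃ j, G j)ᶜ) = 0 := by
      refine measure_mono_null ?_
        (measure_iUnion_null (fun j => measure_iUnion_null (hμD j)))
      intro ω hω
      have hωu : ω ∈ ⋃ j, F j := hFunion ▸ Set.mem_univ ω
      obtain ⟨j, hj⟩ := Set.mem_iUnion.mp hωu
      have hnG : ω ∉ G j := fun h => hω (Set.mem_iUnion.mpr ⟨j, h⟩)
      exact Set.mem_iUnion.mpr ⟨j, hFG j ⟨hj, hnG⟩⟩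
    have hgval : ∀ j, ∀ ω ∈ G j, g ω = c j := by
      intro j ω hω
      have hωF : ω ∈ F j := hω.1
      simp only [hgdef]
      rw [Finset.sum_eq_single j]
      · simp [ind, Set.indicator_apply, hωF]
      · intro k _ hk
        have : ω ∉ F k := by
          intro hωk
          exact (Set.disjoint_left.mp (hFdisj hk) hωk) hωF
        simp [ind, Set.indicator_apply, this]
      · simp
    have hae : g =ᵐ[μ] b := by
      refine measure_mono_null ?_ hZ
      intro ω hω
      simp only [Set.mem_compl_iff, Set.mem_iUnion, not_exists]
      intro j hj
      exact hω (by rw [Set.mem_setOf_eq, hgval j ω hj, hbG j ω hj])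
    have hgind : ∀ j, (fun ω => c j * ind (F j) ω) = (F j).indicator (fun _ => c j) := by
      intro j; funext ω
      by_cases h : ω ∈ F j <;> simp [ind, Set.indicator_apply, h]
    have hgint : Integrable g μ := by
      apply integrable_finset_sum
      intro j _
      rw [hgind j]
      exact (integrable_const (c j)).indicator (hmeasC _ (hatom j).1)
    have hbint : Integrable b μ := hgint.congr hae
    refine ⟨hbint, ?_⟩
    have hintg : ∫ ω, b ω ∂μ = ∑ j, c j * P (F j) := by
      rw [← integral_congr_ae hae, integral_finset_sum _ (fun j _ => by
        rw [hgind j]; exact (integrable_const (c j)).indicator (hmeasC _ (hatom j).1))]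
      refine Finset.sum_congr rfl (fun j _ => ?_)
      rw [hgind j, integral_indicator_const _ (hmeasC _ (hatom j).1),
        measureReal_def, hμ _ (hatom j).1, toReal_ofReal (hP0 _ (hatom j).1), smul_eq_mul, mul_comm]
    rw [hintg]
    -- key identities
    have hsumF : ∑ j, P (F j) = 1 := by
      have := (finAdd_aux hPadd hunion hemptyC hPempty Finset.univ F
        (fun j _ => (hatom j).1)
        (fun j _ k _ hjk => hFdisj hjk)).2
      rw [← this]
      have : (⋃ j ∈ (Finset.univ : Finset (Fin n)), F j) = Set.univ := by
        rw [← hFunion]; simp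
      rw [this, hP1]
    have hsumA : ∀ i, ∑ j, P (A i ∩ F j) = P (A i) := by
      intro i
      have := (finAdd_aux hPadd hunion hemptyC hPempty Finset.univ (fun j => A i ∩ F j)
        (fun j _ => hinter _ (hAC i) _ (hatom j).1)
        (fun j _ k _ hjk => ((hFdisj hjk).mono Set.inter_subset_right Set.inter_subset_right))).2
      rw [← this]
      have h2 : (⋃ j ∈ (Finset.univ : Finset (Fin n)), (A i ∩ F j)) = ⋃ j, A i ∩ F j := by
        simp
      rw [h2, ← Set.inter_iUnion, hFunion, Set.inter_univ]
    have hterm0 : ∀ i, ∑ j, P (F j) * bterm P α A (w j) i = 0 := by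
      intro i
      have hPind : ∀ j, P (F j) * ind (A i) (w j) = P (A i ∩ F j) := by
        intro j
        rw [hindG j (w j) (hw j) i]
        by_cases h : P (A i ∩ F j) ≠ 0
        · rw [if_pos h, mul_one, ((hatomval j i).resolve_right h)]
        · push_neg at h
          rw [if_neg (by simpa using h), mul_zero, h]
      have : ∀ j : Fin n, P (F j) * bterm P α A (w j) i
          = α i * (P (F j) * ind (A i) (w j)) - (α i * P (A i)) * P (F j) := by
        intro j; simp only [bterm]; ring
      rw [Finset.sum_congr rfl (fun j _ => this j), Finset.sum_sub_distrib,
        ← Finset.mul_sum, ← Finset.mul_sum]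
      rw [Finset.sum_congr rfl (fun j _ => hPind j), hsumA i, hsumF]
      ring
    have hkey : ∀ N, ∑ j, P (F j) * (∑ i ∈ Finset.range N, bterm P α A (w j) i) = 0 := by
      intro N
      have : ∀ j : Fin n, P (F j) * (∑ i ∈ Finset.range N, bterm P α A (w j) i)
          = ∑ i ∈ Finset.range N, P (F j) * bterm P α A (w j) i := by
        intro j; rw [Finset.mul_sum]
      rw [Finset.sum_congr rfl (fun j _ => this j), Finset.sum_comm]
      exact Finset.sum_eq_zero (fun i _ => hterm0 i)
    have hlim : Tendsto (fun N => ∑ j, P (F j) * (∑ i ∈ Finset.range N, bterm P α A (w j) i))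
        atTop (nhds (∑ j, P (F j) * c j)) := by
      apply tendsto_finset_sum
      intro j _
      exact (hb (w j)).const_mul _
    have h0 : (∑ j, P (F j) * c j) = 0 := by
      refine tendsto_nhds_unique hlim ?_
      have hfe : (fun N => ∑ j, P (F j) * (∑ i ∈ Finset.range N, bterm P α A (w j) i))
          = fun _ => (0:ℝ) := funext hkey
      rw [hfe]
      exact tendsto_const_nhds
    rw [← h0]
    exact Finset.sum_congr rfl (fun j _ => mul_comm _ _)
  refine ⟨main, ?_⟩
  rintro ⟨α, A, hS3, ε, hε, hL⟩
  choose b hb1 hb2 using hL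
  obtain ⟨hbint, hzero⟩ := main α A hS3 b hb1
  have hmono : ∫ ω, b ω ∂μ ≤ ∫ _ω, (-ε) ∂μ :=
    integral_mono hbint (integrable_const _) hb2
  rw [hzero, integral_const] at hmono
  simp [measure_univ] at hmono
  linarith
end
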